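/- Let a and b be nonnegative real numbers, not both zero. Then ∫_0^∞ x · (a·sech²(x) − b·csch²(x)) / (a·tanh(x) + b·coth(x)) dx = θ·(θ − π) + π²/8, where θ = arcsin(√(b/(a+b))). -/

import Mathlib

set_option maxHeartbeats 1000000

open Real

open MeasureTheory Set Filter in
private lemma xexp_integrable' {c : ℝ} (hc : 0 < c) :
    IntegrableOn (fun x : ℝ => x * Real.exp (-(c * x))) (Set.Ioi 0) := by
  have := integrableOn_rpow_mul_exp_neg_mul_rpow (p := 1) (s := 1) (b := c) (by norm_num) (by norm_num) hc
  refine this.congr_fun (fun x hx => ?_) measurableSet_Ioi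
  simp [Real.rpow_one]

open MeasureTheory Set Filter in
private lemma xexp_integral' {c : ℝ} (hc : 0 < c) :
    ∫ x in Set.Ioi (0:ℝ), x * Real.exp (-(c * x)) = 1 / c ^ 2 := by
  have h := Real.integral_rpow_mul_exp_neg_mul_Ioi (a := 2) (r := c) (by norm_num) hc
  rw [Real.Gamma_two, mul_one] at h
  have h2 : ∫ x in Set.Ioi (0:ℝ), x * Real.exp (-(c * x))
      = ∫ t in Set.Ioi (0:ℝ), t ^ ((2:ℝ) - 1) * Real.exp (-(c * t)) := by
    refine setIntegral_congr_fun measurableSet_Ioi (fun x hx => ?_)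
    norm_num [Real.rpow_one]
  rw [h2, h, show ((2:ℝ)) = ((2:ℕ):ℝ) by norm_num, Real.rpow_natCast]
  field_simp

open MeasureTheory Set Filter in
private lemma cos_sum' {t : ℝ} (ht : t ∈ Set.Icc (0:ℝ) 1) :
    HasSum (fun n : ℕ => Real.cos (2 * π * ((n : ℝ) + 1) * t) / ((n : ℝ) + 1) ^ 2)
      (π ^ 2 * (t ^ 2 - t + 1 / 6)) := by
  have h := hasSum_one_div_nat_pow_mul_cos (k := 1) one_ne_zero ht
  have heval : (Polynomial.map (algebraMap ℚ ℝ) (Polynomial.bernoulli (2 * 1))).eval t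
      = t ^ 2 - t + 1 / 6 := by
    simp_rw [Polynomial.bernoulli, Finset.sum_range_succ]
    simp [bernoulli_eq_bernoulli'_of_ne_one, bernoulli'_two]
    ring
  rw [heval] at h
  have hfac : (((2 * 1).factorial : ℕ) : ℝ) = 2 := by norm_num [Nat.factorial]
  have h2 : ((-1 : ℝ) ^ (1 + 1) * (2 * π) ^ (2 * 1) / 2 / ((2 * 1).factorial : ℝ)
        * (t ^ 2 - t + 1 / 6)) = π ^ 2 * (t ^ 2 - t + 1 / 6) := by
    rw [hfac]; ring
  rw [h2] at h
  have h3 := (hasSum_nat_add_iff'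
      (f := fun n : ℕ => 1 / (n : ℝ) ^ (2 * 1) * Real.cos (2 * π * (n : ℝ) * t)) 1).mpr h
  have he : (fun n : ℕ => Real.cos (2 * π * ((n : ℝ) + 1) * t) / ((n : ℝ) + 1) ^ 2)
      = fun n : ℕ => 1 / (((n + 1 : ℕ)) : ℝ) ^ (2 * 1) * Real.cos (2 * π * ((n + 1 : ℕ) : ℝ) * t) := by
    ext n; push_cast; ring
  rw [he]
  convert h3 using 1
  swap
  simp
  rfl

open MeasureTheory Set Filter in
private lemma hasSum_cos_geom' (φ : ℝ) {q : ℝ} (hq0 : 0 ≤ q) (hq : q < 1) :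
    HasSum (fun n : ℕ => Real.cos ((n + 1) * φ) * q ^ (n + 1))
      ((q * Real.cos φ - q ^ 2) / (1 - 2 * q * Real.cos φ + q ^ 2)) := by
  set z : ℂ := (q : ℂ) * Complex.exp (φ * Complex.I) with hz
  have hnz : ‖z‖ < 1 := by
    rw [hz, norm_mul, Complex.norm_exp_ofReal_mul_I]
    simpa [abs_of_nonneg hq0] using hq
  have hgeo : HasSum (fun n : ℕ => z ^ (n + 1)) (z * (1 - z)⁻¹) := by
    refine ((hasSum_geometric_of_norm_lt_one hnz).mul_left z).congr_fun fun n => ?_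
    rw [pow_succ']
  have hre := Complex.hasSum_re hgeo
  have hterm : ∀ n : ℕ, (z ^ (n + 1)).re = Real.cos ((n + 1) * φ) * q ^ (n + 1) := by
    intro n
    have harg : ((n + 1 : ℕ) : ℂ) * (φ * Complex.I) = (((n : ℝ) + 1) * φ : ℝ) * Complex.I := by
      push_cast; ring
    have hzn : z ^ (n + 1) = Complex.ofReal (Real.cos (((n : ℝ) + 1) * φ))
        * (q : ℂ) ^ (n + 1) + Complex.ofReal (Real.sin (((n : ℝ) + 1) * φ))
        * (q : ℂ) ^ (n + 1) * Complex.I := by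
      rw [hz, mul_pow, ← Complex.exp_nat_mul, harg, Complex.exp_mul_I]
      push_cast
      ring
    rw [hzn]
    simp only [Complex.add_re, Complex.mul_re, Complex.mul_im, Complex.I_re, Complex.I_im,
      Complex.ofReal_re, Complex.ofReal_im, ← Complex.ofReal_pow]
    ring
  have hD : 0 < 1 - 2 * q * Real.cos φ + q ^ 2 := by
    nlinarith [Real.cos_le_one φ, sq_nonneg (1 - q)]
  have hden : Complex.normSq (1 - z) = 1 - 2 * q * Real.cos φ + q ^ 2 := by
    rw [hz, Complex.exp_mul_I]
    simp [Complex.normSq_apply, Complex.cos_ofReal_re, Complex.sin_ofReal_re]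
    linear_combination (q ^ 2) * Real.sin_sq_add_cos_sq φ
  have hval : (z * (1 - z)⁻¹).re = (q * Real.cos φ - q ^ 2) / (1 - 2 * q * Real.cos φ + q ^ 2) := by
    rw [← div_eq_mul_inv, Complex.div_re, hden]
    rw [hz, Complex.exp_mul_I]
    simp [Complex.cos_ofReal_re, Complex.sin_ofReal_re]
    rw [← add_div, div_left_inj' hD.ne']
    linear_combination (-(q ^ 2)) * Real.sin_sq_add_cos_sq φ
  rw [← hval]
  exact hre.congr_fun fun n => (hterm n).symm

open MeasureTheory Set Filter in
private lemma pointwise_hasSum' {a b x θ : ℝ} (ha : 0 ≤ a) (hb : 0 ≤ b) (hs : 0 < a + b)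
    (hcθ : Real.cos (2 * θ) = (a - b) / (a + b)) (hx : 0 < x)
    (hD : 0 < a * Real.tanh x + b * (Real.cosh x / Real.sinh x)) :
    HasSum (fun n : ℕ =>
        4 * Real.cos (((n : ℝ) + 1) * (2 * θ)) * (x * Real.exp (-(2 * ((n : ℝ) + 1) * x)))
          - 4 * (x * Real.exp (-(4 * ((n : ℝ) + 1) * x))))
      (x * (a * (1 / Real.cosh x) ^ 2 - b * (1 / Real.sinh x) ^ 2) /
        (a * Real.tanh x + b * (Real.cosh x / Real.sinh x))) := by
  have hq0 : (0:ℝ) < Real.exp (-(2 * x)) := Real.exp_pos _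
  have hq1 : Real.exp (-(2 * x)) < 1 := Real.exp_lt_one_iff.mpr (by linarith)
  have hq0' : (0:ℝ) < Real.exp (-(4 * x)) := Real.exp_pos _
  have hq1' : Real.exp (-(4 * x)) < 1 := Real.exp_lt_one_iff.mpr (by linarith)
  have h1 := (hasSum_cos_geom' (2 * θ) hq0.le hq1).mul_left (4 * x)
  have h2 := (hasSum_cos_geom' 0 hq0'.le hq1').mul_left (4 * x)
  have H := h1.sub h2
  set u := Real.exp (-x) with hu
  have hu0 : 0 < u := Real.exp_pos _
  have hu1 : u < 1 := Real.exp_lt_one_iff.mpr (by linarith)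
  have hxu : Real.exp x = u⁻¹ := by rw [hu, ← Real.exp_neg, neg_neg]
  have hq2 : Real.exp (-(2 * x)) = u ^ 2 := by
    rw [hu, ← Real.exp_nat_mul]; congr 1; push_cast; ring
  have hq4 : Real.exp (-(4 * x)) = u ^ 4 := by
    rw [hu, ← Real.exp_nat_mul]; congr 1; push_cast; ring
  have hcosh : Real.cosh x = (1 + u ^ 2) / (2 * u) := by
    rw [Real.cosh_eq, hxu, ← hu]; field_simp
  have hsinh : Real.sinh x = (1 - u ^ 2) / (2 * u) := by
    rw [Real.sinh_eq, hxu, ← hu]; field_simp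
  have h1u2 : (0:ℝ) < 1 - u ^ 2 := by nlinarith
  have h1pu2 : (0:ℝ) < 1 + u ^ 2 := by positivity
  have h1u4 : (0:ℝ) < 1 - u ^ 4 := by nlinarith
  have hP : (0:ℝ) < 1 - 2 * u ^ 2 * ((a - b) / (a + b)) + (u ^ 2) ^ 2 := by
    have hcle : (a - b) / (a + b) ≤ 1 := by
      rw [div_le_one hs]; linarith
    nlinarith [sq_nonneg (1 - u ^ 2)]
  have hB1 : (0:ℝ) < (a + b) - 2 * u ^ 2 * (a - b) + u ^ 4 * (a + b) := by
    nlinarith [mul_pos hs (mul_pos h1u2 h1u2), mul_nonneg hb (sq_nonneg u)]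
  have h14 : (0:ℝ) < 1 - 2 * u ^ 4 * 1 + (u ^ 4) ^ 2 := by nlinarith
  have hval : 4 * x * ((Real.exp (-(2 * x)) * Real.cos (2 * θ) - Real.exp (-(2 * x)) ^ 2) /
        (1 - 2 * Real.exp (-(2 * x)) * Real.cos (2 * θ) + Real.exp (-(2 * x)) ^ 2))
      - 4 * x * ((Real.exp (-(4 * x)) * Real.cos 0 - Real.exp (-(4 * x)) ^ 2) /
        (1 - 2 * Real.exp (-(4 * x)) * Real.cos 0 + Real.exp (-(4 * x)) ^ 2))
      = x * (a * (1 / Real.cosh x) ^ 2 - b * (1 / Real.sinh x) ^ 2) /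
        (a * Real.tanh x + b * (Real.cosh x / Real.sinh x)) := by
    rw [Real.cos_zero, hq2, hq4, hcθ]
    have e1 : (u ^ 2 * ((a - b) / (a + b)) - (u ^ 2) ^ 2) /
        (1 - 2 * u ^ 2 * ((a - b) / (a + b)) + (u ^ 2) ^ 2)
        = (u ^ 2 * (a - b) - u ^ 4 * (a + b)) /
          ((a + b) - 2 * u ^ 2 * (a - b) + u ^ 4 * (a + b)) := by
      rw [div_eq_div_iff hP.ne' hB1.ne']
      field_simp
    have e2 : (u ^ 4 * 1 - (u ^ 4) ^ 2) / (1 - 2 * u ^ 4 * 1 + (u ^ 4) ^ 2)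
        = u ^ 4 / (1 - u ^ 4) := by
      rw [div_eq_div_iff h14.ne' h1u4.ne']
      ring
    rw [e1, e2, eq_div_iff hD.ne', Real.tanh_eq_sinh_div_cosh, hcosh, hsinh]
    rw [div_div_div_cancel_right₀ (by positivity), div_div_div_cancel_right₀ (by positivity)]
    rw [mul_div_assoc' (4 * x), mul_div_assoc' (4 * x), div_sub_div _ _ hB1.ne' h1u4.ne']
    field_simp
    have hBinv : (a - a * u ^ 2 * 2 + a * u ^ 4 + b + b * u ^ 2 * 2 + b * u ^ 4) *
        (a - a * u ^ 2 * 2 + a * u ^ 4 + b + b * u ^ 2 * 2 + b * u ^ 4)⁻¹ = 1 :=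
      mul_inv_cancel₀ (by nlinarith [hB1])
    linear_combination (a * 4 - a * u ^ 2 * 8 + a * u ^ 6 * 8 - a * u ^ 8 * 4 - b * 4 - b * u ^ 2 * 8
      + b * u ^ 6 * 8 + b * u ^ 8 * 4) * hBinv
  rw [hval] at H
  refine H.congr_fun fun n => ?_
  have e1 : Real.exp (-(2 * x)) ^ (n + 1) = Real.exp (-(2 * ((n : ℝ) + 1) * x)) := by
    rw [← Real.exp_nat_mul]; congr 1; push_cast; ring
  have e2 : Real.exp (-(4 * x)) ^ (n + 1) = Real.exp (-(4 * ((n : ℝ) + 1) * x)) := by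
    rw [← Real.exp_nat_mul]; congr 1; push_cast; ring
  rw [e1, e2, mul_zero, Real.cos_zero]
  ring

/-- for nonnegative reals `a, b`, not both zero, with
`θ = arcsin(√(b/(a+b)))`,
`∫_0^∞ x (a sech²x − b csch²x)/(a tanh x + b coth x) dx = θ(θ − π) + π²/8`. -/
theorem integral_sech_csch (a b : ℝ) (ha : 0 ≤ a) (hb : 0 ≤ b) (hab : a ≠ 0 ∨ b ≠ 0) :
    ∫ x in Set.Ioi (0 : ℝ),
        x * (a * (1 / Real.cosh x) ^ 2 - b * (1 / Real.sinh x) ^ 2) /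
          (a * Real.tanh x + b * (Real.cosh x / Real.sinh x)) =
      Real.arcsin (Real.sqrt (b / (a + b))) *
          (Real.arcsin (Real.sqrt (b / (a + b))) - Real.pi) +
        Real.pi ^ 2 / 8 := by
  classical
  set θ := Real.arcsin (Real.sqrt (b / (a + b))) with hθdef
  have hs : 0 < a + b := by
    rcases hab with h | h
    · have := lt_of_le_of_ne ha (Ne.symm h); linarith
    · have := lt_of_le_of_ne hb (Ne.symm h); linarith
  have hbs0 : 0 ≤ b / (a + b) := div_nonneg hb hs.le
  have hbs1 : b / (a + b) ≤ 1 := by rw [div_le_one hs]; linarith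
  have hsin : Real.sin θ = Real.sqrt (b / (a + b)) :=
    Real.sin_arcsin (by linarith [Real.sqrt_nonneg (b / (a + b))]) (Real.sqrt_le_one.mpr hbs1)
  have hsin2 : Real.sin θ ^ 2 = b / (a + b) := by rw [hsin, Real.sq_sqrt hbs0]
  have hcθ : Real.cos (2 * θ) = (a - b) / (a + b) := by
    have hth : Real.cos (2 * θ) = 1 - 2 * Real.sin θ ^ 2 := by
      have h1 := Real.cos_two_mul θ
      have h2 := Real.sin_sq_add_cos_sq θ
      linear_combination h1 + 2 * h2
    rw [hth, hsin2]
    field_simp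
    ring
  have hθ0 : 0 ≤ θ := Real.arcsin_nonneg.mpr (Real.sqrt_nonneg _)
  have hθ2 : θ ≤ π / 2 := Real.arcsin_le_pi_div_two _
  have hπ : 0 < π := Real.pi_pos
  set t := θ / π with htdef
  have ht : t ∈ Set.Icc (0:ℝ) 1 :=
    ⟨div_nonneg hθ0 hπ.le, by rw [htdef, div_le_one hπ]; linarith⟩
  set F : ℕ → ℝ → ℝ := fun n x =>
    4 * Real.cos (((n : ℝ) + 1) * (2 * θ)) * (x * Real.exp (-(2 * ((n : ℝ) + 1) * x)))
      - 4 * (x * Real.exp (-(4 * ((n : ℝ) + 1) * x))) with hF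
  have hc1 : ∀ n : ℕ, (0:ℝ) < 2 * ((n : ℝ) + 1) := fun n => by positivity
  have hc2 : ∀ n : ℕ, (0:ℝ) < 4 * ((n : ℝ) + 1) := fun n => by positivity
  have hFint : ∀ n : ℕ, MeasureTheory.IntegrableOn (F n) (Set.Ioi 0) := fun n =>
    ((xexp_integrable' (hc1 n)).const_mul _).sub ((xexp_integrable' (hc2 n)).const_mul 4)
  have hFval : ∀ n : ℕ, ∫ x in Set.Ioi (0:ℝ), F n x
      = Real.cos (2 * π * ((n : ℝ) + 1) * t) / ((n : ℝ) + 1) ^ 2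
        - 1 / 4 * (1 / ((n : ℝ) + 1) ^ 2) := by
    intro n
    have harg : 2 * π * ((n : ℝ) + 1) * t = ((n : ℝ) + 1) * (2 * θ) := by
      rw [htdef]; field_simp
    rw [hF]
    rw [MeasureTheory.integral_sub ((xexp_integrable' (hc1 n)).const_mul _)
        ((xexp_integrable' (hc2 n)).const_mul 4),
      MeasureTheory.integral_const_mul, MeasureTheory.integral_const_mul,
      xexp_integral' (hc1 n), xexp_integral' (hc2 n), harg]
    have hn : ((n : ℝ) + 1) ≠ 0 := by positivity
    field_simp
    ring
  have hnormle : ∀ n : ℕ, ∫ x in Set.Ioi (0:ℝ), ‖F n x‖ ≤ 2 * (1 / ((n : ℝ) + 1) ^ 2) := by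
    intro n
    have hgint : MeasureTheory.IntegrableOn
        (fun x : ℝ => 4 * (x * Real.exp (-(2 * ((n : ℝ) + 1) * x)))
          + 4 * (x * Real.exp (-(4 * ((n : ℝ) + 1) * x)))) (Set.Ioi 0) :=
      ((xexp_integrable' (hc1 n)).const_mul 4).add ((xexp_integrable' (hc2 n)).const_mul 4)
    have hle : ∫ x in Set.Ioi (0:ℝ), ‖F n x‖
        ≤ ∫ x in Set.Ioi (0:ℝ), (4 * (x * Real.exp (-(2 * ((n : ℝ) + 1) * x)))
          + 4 * (x * Real.exp (-(4 * ((n : ℝ) + 1) * x)))) := by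
      refine MeasureTheory.integral_mono_ae (hFint n).norm hgint ?_
      rw [Filter.EventuallyLE, MeasureTheory.ae_restrict_iff' measurableSet_Ioi]
      filter_upwards with x hx
      have hx0 : (0:ℝ) < x := hx
      have hm1 : 0 ≤ x * Real.exp (-(2 * ((n : ℝ) + 1) * x)) := by positivity
      have hm2 : 0 ≤ x * Real.exp (-(4 * ((n : ℝ) + 1) * x)) := by positivity
      have hco1 := Real.neg_one_le_cos (((n : ℝ) + 1) * (2 * θ))
      have hco2 := Real.cos_le_one (((n : ℝ) + 1) * (2 * θ))
      simp only [hF, Real.norm_eq_abs]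
      rw [abs_le]
      constructor <;> nlinarith [mul_nonneg hm1 (by linarith : (0:ℝ) ≤ 1 + Real.cos (((n : ℝ) + 1) * (2 * θ))),
        mul_nonneg hm1 (by linarith : (0:ℝ) ≤ 1 - Real.cos (((n : ℝ) + 1) * (2 * θ)))]
    refine hle.trans ?_
    rw [MeasureTheory.integral_add ((xexp_integrable' (hc1 n)).const_mul 4)
        ((xexp_integrable' (hc2 n)).const_mul 4),
      MeasureTheory.integral_const_mul, MeasureTheory.integral_const_mul,
      xexp_integral' (hc1 n), xexp_integral' (hc2 n)]
    have hz : (0:ℝ) < (n : ℝ) + 1 := by positivity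
    have e1 : 4 * (1 / (2 * ((n : ℝ) + 1)) ^ 2) = 1 / ((n : ℝ) + 1) ^ 2 := by
      field_simp
      ring
    have e2 : 4 * (1 / (4 * ((n : ℝ) + 1)) ^ 2) = 1 / (4 * ((n : ℝ) + 1) ^ 2) := by
      field_simp
    rw [e1, e2]
    have h3 : 1 / (4 * ((n : ℝ) + 1) ^ 2) ≤ 1 / ((n : ℝ) + 1) ^ 2 :=
      one_div_le_one_div_of_le (by positivity) (by nlinarith)
    linarith
  have hsummable : Summable (fun n : ℕ => ∫ x in Set.Ioi (0:ℝ), ‖F n x‖) := by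
    have hbase : Summable (fun n : ℕ => (1:ℝ) / (n : ℝ) ^ 2) := hasSum_zeta_two.summable
    have hshift : Summable (fun n : ℕ => (1:ℝ) / (((n + 1 : ℕ)) : ℝ) ^ 2) :=
      (summable_nat_add_iff 1).mpr hbase
    have hg : Summable (fun n : ℕ => 2 * (1 / ((n : ℝ) + 1) ^ 2)) := by
      refine (hshift.mul_left 2).congr fun n => ?_
      push_cast
      ring
    exact Summable.of_nonneg_of_le
      (fun n => MeasureTheory.integral_nonneg fun x => norm_nonneg _) hnormle hg
  have hDpos : ∀ x ∈ Set.Ioi (0:ℝ),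
      0 < a * Real.tanh x + b * (Real.cosh x / Real.sinh x) := by
    intro x hx
    have hsx : 0 < Real.sinh x := Real.sinh_pos_iff.mpr hx
    have hcx : 0 < Real.cosh x := Real.cosh_pos x
    have htx : 0 < Real.tanh x := by rw [Real.tanh_eq_sinh_div_cosh]; positivity
    have hcs : 0 < Real.cosh x / Real.sinh x := by positivity
    rcases hab with h | h
    · have h' : 0 < a := lt_of_le_of_ne ha (Ne.symm h)
      nlinarith [mul_nonneg hb hcs.le]
    · have h' : 0 < b := lt_of_le_of_ne hb (Ne.symm h)
      nlinarith [mul_nonneg ha htx.le]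
  have hpt : Set.EqOn
      (fun x : ℝ => x * (a * (1 / Real.cosh x) ^ 2 - b * (1 / Real.sinh x) ^ 2) /
        (a * Real.tanh x + b * (Real.cosh x / Real.sinh x)))
      (fun x : ℝ => ∑' n : ℕ, F n x) (Set.Ioi 0) := fun x hx =>
    (pointwise_hasSum' ha hb hs hcθ hx (hDpos x hx)).tsum_eq.symm
  rw [MeasureTheory.setIntegral_congr_fun measurableSet_Ioi hpt,
    ← MeasureTheory.integral_tsum_of_summable_integral_norm hFint hsummable]
  have hA := cos_sum' ht
  have h0 : (0:ℝ) ∈ Set.Icc (0:ℝ) 1 := ⟨le_refl 0, zero_le_one⟩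
  have hB := (cos_sum' h0).mul_left (1 / 4)
  have hB' : HasSum (fun n : ℕ => 1 / 4 * (1 / ((n : ℝ) + 1) ^ 2))
      (1 / 4 * (π ^ 2 * ((0:ℝ) ^ 2 - 0 + 1 / 6))) := by
    refine hB.congr_fun fun n => ?_
    norm_num
  have H := hA.sub hB'
  calc ∑' n : ℕ, ∫ x in Set.Ioi (0:ℝ), F n x
      = ∑' n : ℕ, (Real.cos (2 * π * ((n : ℝ) + 1) * t) / ((n : ℝ) + 1) ^ 2
          - 1 / 4 * (1 / ((n : ℝ) + 1) ^ 2)) := tsum_congr hFval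
    _ = π ^ 2 * (t ^ 2 - t + 1 / 6) - 1 / 4 * (π ^ 2 * ((0:ℝ) ^ 2 - 0 + 1 / 6)) := H.tsum_eq
    _ = θ * (θ - π) + π ^ 2 / 8 := by
        rw [htdef]
        field_simp
        ring
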